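/- Let φ ∈ L^∞(ℝⁿ) with φ ≥ 0. Then ‖φ(·+a) f‖_{L²} → 0 as |a| → ∞ for every f ∈ L²(ℝⁿ) if and only if there exists a compact neighborhood W of 0 such that ∫_{a+W} φ(x) dx → 0 as |a| → ∞. -/

import Mathlib

open MeasureTheory Filter Metric
open scoped Pointwise

section Stmt8Aux

variable {n : ℕ}

lemma stmt8_vadd_measurable {W : Set (EuclideanSpace ℝ (Fin n))} (hW : MeasurableSet W)
    (a : EuclideanSpace ℝ (Fin n)) : MeasurableSet (a +ᵥ W) := by
  have : a +ᵥ W = (fun x => -a + x) ⁻¹' W := by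
    ext x; simp [Set.mem_vadd_set_iff_neg_vadd_mem]
  rw [this]; exact hW.preimage (measurable_const_add _)

lemma stmt8_setIntegral_translate (ψ : EuclideanSpace ℝ (Fin n) → ℝ)
    {W : Set (EuclideanSpace ℝ (Fin n))} (hW : MeasurableSet W) (a : EuclideanSpace ℝ (Fin n)) :
    ∫ x in W, ψ (x + a) = ∫ x in a +ᵥ W, ψ x := by
  have hmem : ∀ x, x + a ∈ a +ᵥ W ↔ x ∈ W := fun x => by
    simp [Set.mem_vadd_set_iff_neg_vadd_mem, add_comm x a, neg_add_cancel_left]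
  rw [← integral_indicator hW, ← integral_indicator (stmt8_vadd_measurable hW a),
    ← integral_add_right_eq_self ((a +ᵥ W).indicator ψ) a]
  congr 1; ext x
  by_cases hx : x ∈ W
  · rw [Set.indicator_of_mem ((hmem x).2 hx), Set.indicator_of_mem hx]
  · rw [Set.indicator_of_notMem (fun h => hx ((hmem x).1 h)), Set.indicator_of_notMem hx]

lemma stmt8_intOn {φ : EuclideanSpace ℝ (Fin n) → ℝ} (hmeas : Measurable φ) {C : ℝ}
    (hφ : ∀ x, 0 ≤ φ x ∧ φ x ≤ C) {s : Set (EuclideanSpace ℝ (Fin n))}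
    (hs : volume s < ⊤) : IntegrableOn φ s := by
  refine Integrable.mono' (integrableOn_const (C := C) hs.ne)
    hmeas.aestronglyMeasurable ?_
  exact ae_of_all _ fun x => by
    rw [Real.norm_of_nonneg (hφ x).1]; exact (hφ x).2

lemma stmt8_tendsto_add_right (z : EuclideanSpace ℝ (Fin n)) :
    Tendsto (fun a : EuclideanSpace ℝ (Fin n) => a + z)
      (Bornology.cobounded _) (Bornology.cobounded _) := by
  rw [← tendsto_norm_atTop_iff_cobounded]
  have h1 : Tendsto (fun a : EuclideanSpace ℝ (Fin n) => ‖a‖ - ‖z‖)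
      (Bornology.cobounded _) atTop :=
    (tendsto_norm_cobounded_atTop).atTop_add tendsto_const_nhds
  refine tendsto_atTop_mono (fun a => ?_) h1
  have : ‖a‖ ≤ ‖a + z‖ + ‖z‖ := by simpa using norm_add_le (a + z) (-z)
  linarith

lemma stmt8_sum_bound {ι : Type*} (t : Finset ι) (s : ι → Set (EuclideanSpace ℝ (Fin n)))
    (K : Set (EuclideanSpace ℝ (Fin n))) (hK : MeasurableSet K)
    (hs : ∀ i, MeasurableSet (s i)) (hsub : K ⊆ ⋃ i ∈ t, s i)
    {φ : EuclideanSpace ℝ (Fin n) → ℝ} (hnn : ∀ x, 0 ≤ φ x)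
    (hiK : IntegrableOn φ K) (his : ∀ i, IntegrableOn φ (s i)) :
    ∫ x in K, φ x ≤ ∑ i ∈ t, ∫ x in s i, φ x := by
  rw [← integral_indicator hK]
  have hsum : ∀ i ∈ t, ∫ x in s i, φ x = ∫ x, (s i).indicator φ x :=
    fun i _ => (integral_indicator (hs i)).symm
  rw [Finset.sum_congr rfl hsum, ← integral_finset_sum]
  · refine integral_mono ?_ ?_ ?_
    · rwa [integrable_indicator_iff hK]
    · exact integrable_finset_sum _ fun i _ => (integrable_indicator_iff (hs i)).2 (his i)
    · intro x
      by_cases hx : x ∈ K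
      · obtain ⟨i, hi, hxi⟩ := by simpa using hsub hx
        rw [Set.indicator_of_mem hx]
        calc φ x = (s i).indicator φ x := (Set.indicator_of_mem hxi φ).symm
        _ ≤ ∑ j ∈ t, (s j).indicator φ x :=
          Finset.single_le_sum (fun j _ => Set.indicator_nonneg (fun y _ => hnn y) x) hi
      · rw [Set.indicator_of_notMem hx]
        exact Finset.sum_nonneg fun j _ => Set.indicator_nonneg (fun y _ => hnn y) x
  · exact fun i _ => (integrable_indicator_iff (hs i)).2 (his i)

lemma stmt8_cover {W K : Set (EuclideanSpace ℝ (Fin n))} (hW0 : W ∈ nhds 0) (hK : IsCompact K) :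
    ∃ t : Finset (EuclideanSpace ℝ (Fin n)), K ⊆ ⋃ z ∈ t, z +ᵥ W := by
  have hint : (0 : EuclideanSpace ℝ (Fin n)) ∈ interior W := mem_interior_iff_mem_nhds.2 hW0
  obtain ⟨t, ht⟩ := hK.elim_finite_subcover (fun z => z +ᵥ interior W)
    (fun z => isOpen_interior.vadd z) (fun x hx => Set.mem_iUnion.2 ⟨x, ⟨0, hint, add_zero x⟩⟩)
  exact ⟨t, ht.trans (Set.iUnion₂_mono fun z _ => Set.vadd_set_mono interior_subset)⟩

lemma stmt8_tendsto_compact {φ : EuclideanSpace ℝ (Fin n) → ℝ} (hmeas : Measurable φ) {C : ℝ}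
    (hφ : ∀ x, 0 ≤ φ x ∧ φ x ≤ C) {W : Set (EuclideanSpace ℝ (Fin n))}
    (hWc : IsCompact W) (hW0 : W ∈ nhds 0)
    (h : Tendsto (fun a => ∫ x in a +ᵥ W, φ x)
      (Bornology.cobounded (EuclideanSpace ℝ (Fin n))) (nhds 0))
    {K : Set (EuclideanSpace ℝ (Fin n))} (hK : IsCompact K) :
    Tendsto (fun a => ∫ x in a +ᵥ K, φ x)
      (Bornology.cobounded (EuclideanSpace ℝ (Fin n))) (nhds 0) := by
  obtain ⟨t, ht⟩ := stmt8_cover hW0 hK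
  have hsum : Tendsto (fun a => ∑ z ∈ t, ∫ x in (a + z) +ᵥ W, φ x)
      (Bornology.cobounded (EuclideanSpace ℝ (Fin n))) (nhds 0) := by
    have := tendsto_finset_sum t
      (fun z (_ : z ∈ t) => h.comp (stmt8_tendsto_add_right z))
    simpa using this
  refine squeeze_zero (fun a => setIntegral_nonneg ((hK.vadd a).measurableSet)
    (fun x _ => (hφ x).1)) (fun a => ?_) hsum
  have hsub : a +ᵥ K ⊆ ⋃ z ∈ t, (a + z) +ᵥ W := by
    intro x hx
    obtain ⟨k, hk, rfl⟩ := hx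
    obtain ⟨z, hz, hkz⟩ := by simpa using ht hk
    exact Set.mem_iUnion₂.2 ⟨z, hz, by
      obtain ⟨w, hw, rfl⟩ := hkz
      exact ⟨w, hw, by simp [vadd_eq_add]; abel⟩⟩
  refine stmt8_sum_bound t _ _ ((hK.vadd a).measurableSet)
    (fun z => ((hWc.vadd (a + z)).measurableSet)) hsub (fun x => (hφ x).1) ?_ ?_
  · exact stmt8_intOn hmeas hφ (hK.vadd a).measure_lt_top
  · exact fun z => stmt8_intOn hmeas hφ (hWc.vadd (a + z)).measure_lt_top

lemma stmt8_CS {φ : EuclideanSpace ℝ (Fin n) → ℝ} (hmeas : Measurable φ) {C : ℝ}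
    (hφ : ∀ x, 0 ≤ φ x ∧ φ x ≤ C) {s : Set (EuclideanSpace ℝ (Fin n))}
    (hs : volume s < ⊤) :
    ∫ x in s, φ x ≤ Real.sqrt (∫ x in s, φ x ^ 2) * Real.sqrt (volume s).toReal := by
  haveI : IsFiniteMeasure (volume.restrict s) :=
    ⟨by rw [Measure.restrict_apply_univ]; exact hs⟩
  have hpq : (2:ℝ).HolderConjugate 2 := Real.HolderConjugate.two_two
  have hm1 : MemLp φ (ENNReal.ofReal 2) (volume.restrict s) := by
    refine MemLp.of_bound hmeas.aestronglyMeasurable C ?_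
    exact ae_of_all _ fun x => by rw [Real.norm_of_nonneg (hφ x).1]; exact (hφ x).2
  have hm2 : MemLp (fun _ => (1:ℝ)) (ENNReal.ofReal 2) (volume.restrict s) := memLp_const 1
  have key := integral_mul_le_Lp_mul_Lq_of_nonneg hpq (ae_of_all _ fun x => (hφ x).1)
    (ae_of_all _ fun _ => zero_le_one) hm1 hm2
  simp only [mul_one, Real.one_rpow, integral_const, Measure.real, Measure.restrict_apply_univ, smul_eq_mul]
    at key
  have h2 : ∀ y : ℝ, 0 ≤ y → y ^ (2:ℝ) = y ^ 2 := fun y hy => by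
    rw [show (2:ℝ) = ((2:ℕ):ℝ) by norm_num, Real.rpow_natCast]
  calc ∫ x in s, φ x ≤ (∫ x in s, φ x ^ (2:ℝ)) ^ (1/2 : ℝ) *
        (volume s).toReal ^ (1/2 : ℝ) := key
    _ = Real.sqrt (∫ x in s, φ x ^ 2) * Real.sqrt (volume s).toReal := by
        rw [← Real.sqrt_eq_rpow, ← Real.sqrt_eq_rpow]
        congr 2
        exact integral_congr_ae (ae_of_all _ fun x => h2 _ (hφ x).1)

end Stmt8Aux

set_option maxHeartbeats 1000000 in
/-- For `φ ≥ 0` in `L^∞(ℝⁿ)`: `‖φ(·+a) f‖_{L²} → 0` as `|a| → ∞` for every `f ∈ L²` iff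
there is a compact neighborhood `W` of `0` with `∫_{a+W} φ → 0` as `|a| → ∞`. -/
theorem stmt8 (n : ℕ) (φ : EuclideanSpace ℝ (Fin n) → ℝ) (hmeas : Measurable φ)
    (C : ℝ) (hφ : ∀ x, 0 ≤ φ x ∧ φ x ≤ C) :
    (∀ f : EuclideanSpace ℝ (Fin n) → ℂ, MemLp f 2 volume →
        Tendsto (fun a => ∫ x, (φ (x + a)) ^ 2 * ‖f x‖ ^ 2)
          (Bornology.cobounded (EuclideanSpace ℝ (Fin n))) (nhds 0)) ↔
      ∃ W : Set (EuclideanSpace ℝ (Fin n)), IsCompact W ∧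
        W ∈ nhds (0 : EuclideanSpace ℝ (Fin n)) ∧
        Tendsto (fun a => ∫ x in a +ᵥ W, φ x)
          (Bornology.cobounded (EuclideanSpace ℝ (Fin n))) (nhds 0) := by
  have hC0 : 0 ≤ C := le_trans (hφ 0).1 (hφ 0).2
  have hφ2 : ∀ x, 0 ≤ φ x ^ 2 ∧ φ x ^ 2 ≤ C ^ 2 := fun x =>
    ⟨sq_nonneg _, pow_le_pow_left₀ (hφ x).1 (hφ x).2 2⟩
  constructor
  · -- forward direction
    intro h
    set B : Set (EuclideanSpace ℝ (Fin n)) := closedBall 0 1 with hB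
    refine ⟨B, isCompact_closedBall 0 1, closedBall_mem_nhds 0 one_pos, ?_⟩
    have hf : MemLp (B.indicator (fun _ => (1:ℂ))) 2 volume :=
      memLp_indicator_const 2 measurableSet_closedBall 1
        (Or.inr (isCompact_closedBall 0 1).measure_lt_top.ne)
    have hkey := h _ hf
    have heq : ∀ a : EuclideanSpace ℝ (Fin n),
        (∫ x, (φ (x + a)) ^ 2 * ‖B.indicator (fun _ => (1:ℂ)) x‖ ^ 2)
        = ∫ x in a +ᵥ B, φ x ^ 2 := by
      intro a
      have hBm : MeasurableSet B := by rw [hB]; exact measurableSet_closedBall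
      rw [← stmt8_setIntegral_translate (fun x => φ x ^ 2) hBm a, ← integral_indicator hBm]
      congr 1; ext x
      by_cases hx : x ∈ B
      · simp [Set.indicator_of_mem hx]
      · simp [Set.indicator_of_notMem hx]
    rw [funext heq] at hkey
    -- use Cauchy-Schwarz to conclude
    have hub : ∀ a : EuclideanSpace ℝ (Fin n), ∫ x in a +ᵥ B, φ x ≤
        Real.sqrt (∫ x in a +ᵥ B, φ x ^ 2) * Real.sqrt (volume B).toReal := by
      intro a
      have hvol : volume (a +ᵥ B) = volume B := by
        have : a +ᵥ B = (fun x => -a + x) ⁻¹' B := by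
          ext x; simp [Set.mem_vadd_set_iff_neg_vadd_mem]
        rw [this, measure_preimage_add]
      rw [← hvol]
      exact stmt8_CS hmeas hφ
        (hvol ▸ (isCompact_closedBall 0 1).measure_lt_top)
    have hlim : Tendsto (fun a => Real.sqrt (∫ x in a +ᵥ B, φ x ^ 2) *
        Real.sqrt (volume B).toReal)
        (Bornology.cobounded (EuclideanSpace ℝ (Fin n))) (nhds 0) := by
      have h1 : Tendsto (fun a => Real.sqrt (∫ x in a +ᵥ B, φ x ^ 2))
          (Bornology.cobounded (EuclideanSpace ℝ (Fin n))) (nhds 0) := by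
        have := (Real.continuous_sqrt.tendsto 0).comp hkey
        simpa [Function.comp_def] using this
      simpa using h1.mul_const (Real.sqrt (volume B).toReal)
    refine squeeze_zero (fun a => setIntegral_nonneg
      ((isCompact_closedBall 0 1).vadd a).measurableSet (fun x _ => (hφ x).1)) hub hlim
  · -- reverse direction
    rintro ⟨W, hWc, hW0, htend⟩ f hf
    set g : EuclideanSpace ℝ (Fin n) → ℝ := fun x => ‖f x‖ ^ 2 with hgdef
    have hg : Integrable g := by
      have := hf.integrable_norm_rpow two_ne_zero ENNReal.ofNat_ne_top
      simpa [Real.rpow_natCast] using this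
    have hgnn : ∀ x, 0 ≤ g x := fun x => sq_nonneg _
    -- truncations
    set t : ℕ → EuclideanSpace ℝ (Fin n) → ℝ := fun m =>
      (closedBall (0 : EuclideanSpace ℝ (Fin n)) m).indicator (fun x => min (g x) m) with htdef
    have htle : ∀ m x, t m x ≤ g x := by
      intro m x
      by_cases hx : x ∈ closedBall (0 : EuclideanSpace ℝ (Fin n)) m
      · rw [htdef]; simp only [Set.indicator_of_mem hx]; exact min_le_left _ _
      · rw [htdef]; simp only [Set.indicator_of_notMem hx]; exact hgnn x
    have htnn : ∀ m x, 0 ≤ t m x := by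
      intro m x
      exact Set.indicator_nonneg (fun y _ => le_min (hgnn y) (Nat.cast_nonneg m)) x
    have htm : ∀ m, Integrable (t m) := by
      intro m
      refine hg.mono' (((hg.aemeasurable.min aemeasurable_const).indicator
        measurableSet_closedBall).aestronglyMeasurable) (ae_of_all _ fun x => ?_)
      rw [Real.norm_of_nonneg (htnn m x)]; exact htle m x
    have hmono : ∀ x, Monotone fun m => t m x := by
      intro x m k hmk
      by_cases hx : x ∈ closedBall (0 : EuclideanSpace ℝ (Fin n)) m
      · have hx' : x ∈ closedBall (0 : EuclideanSpace ℝ (Fin n)) k :=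
          closedBall_subset_closedBall (by exact_mod_cast hmk) hx
        rw [htdef]; simp only [Set.indicator_of_mem hx, Set.indicator_of_mem hx']
        exact min_le_min le_rfl (by exact_mod_cast hmk)
      · rw [htdef]; simp only [Set.indicator_of_notMem hx]
        exact htnn k x
    have hlim : ∀ x, Tendsto (fun m => t m x) atTop (nhds (g x)) := by
      intro x
      refine tendsto_atTop_of_eventually_const (i₀ := max ⌈‖x‖⌉₊ ⌈g x⌉₊) fun m hm => ?_
      have hx : x ∈ closedBall (0 : EuclideanSpace ℝ (Fin n)) m := by
        rw [mem_closedBall, dist_zero_right]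
        exact le_trans (Nat.le_ceil _) (by exact_mod_cast le_trans (le_max_left _ _) hm)
      have hgx : g x ≤ m :=
        le_trans (Nat.le_ceil _) (by exact_mod_cast le_trans (le_max_right _ _) hm)
      rw [htdef]; simp only [Set.indicator_of_mem hx]
      exact min_eq_left hgx
    have hconv : Tendsto (fun m => ∫ x, t m x) atTop (nhds (∫ x, g x)) :=
      integral_tendsto_of_tendsto_of_monotone htm hg (ae_of_all _ hmono) (ae_of_all _ hlim)
    rw [NormedAddCommGroup.tendsto_nhds_zero]
    intro ε hε
    set δ1 : ℝ := ε / (2 * (C ^ 2 + 1)) with hδ1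
    have hδ1pos : 0 < δ1 := by positivity
    obtain ⟨m, hm⟩ : ∃ m : ℕ, (∫ x, g x) - (∫ x, t m x) < δ1 := by
      have : ∀ᶠ m in atTop, (∫ x, g x) - δ1 < ∫ x, t m x :=
        hconv.eventually (eventually_gt_nhds (by linarith))
      obtain ⟨m, hm⟩ := this.exists
      exact ⟨m, by linarith⟩
    have hmB : (∫ x, g x) - (∫ x, t m x) ≥ 0 := by
      have := integral_mono (htm m) hg (htle m)
      linarith
    set δ2 : ℝ := ε / (2 * (C * m + 1)) with hδ2
    have hδ2pos : 0 < δ2 := by positivity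
    -- the compact-translate integral tends to 0
    have hcpt := stmt8_tendsto_compact hmeas hφ hWc hW0 htend
      (isCompact_closedBall (0 : EuclideanSpace ℝ (Fin n)) m)
    have hev : ∀ᶠ a in Bornology.cobounded (EuclideanSpace ℝ (Fin n)),
        ∫ x in a +ᵥ closedBall (0 : EuclideanSpace ℝ (Fin n)) m, φ x < δ2 :=
      hcpt.eventually (eventually_lt_nhds hδ2pos)
    filter_upwards [hev] with a ha
    set Ia : ℝ := ∫ x in a +ᵥ closedBall (0 : EuclideanSpace ℝ (Fin n)) m, φ x with hIa
    have hIann : 0 ≤ Ia :=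
      setIntegral_nonneg ((isCompact_closedBall _ _).vadd a).measurableSet fun x _ => (hφ x).1
    -- integrabilities
    have haφ : Measurable fun x => φ (x + a) := hmeas.comp (measurable_add_const a)
    have hI1 : Integrable fun x => φ (x + a) ^ 2 * g x := by
      refine Integrable.mono' (hg.const_mul (C ^ 2))
        (((haφ.pow_const 2).aestronglyMeasurable).mul hg.aestronglyMeasurable)
        (ae_of_all _ fun x => ?_)
      rw [Real.norm_of_nonneg (mul_nonneg (sq_nonneg _) (hgnn x))]
      exact mul_le_mul_of_nonneg_right (hφ2 (x + a)).2 (hgnn x)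
    have hI2 : Integrable fun x => φ (x + a) ^ 2 * t m x := by
      refine Integrable.mono' ((htm m).const_mul (C ^ 2))
        (((haφ.pow_const 2).aestronglyMeasurable).mul (htm m).aestronglyMeasurable)
        (ae_of_all _ fun x => ?_)
      rw [Real.norm_of_nonneg (mul_nonneg (sq_nonneg _) (htnn m x))]
      exact mul_le_mul_of_nonneg_right (hφ2 (x + a)).2 (htnn m x)
    have hI3 : Integrable fun x => g x - t m x := hg.sub (htm m)
    have hI5 : Integrable fun x => φ (x + a) ^ 2 * (g x - t m x) := by
      have := hI1.sub hI2
      refine this.congr (ae_of_all _ fun x => ?_)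
      simp only [Pi.sub_apply, hgdef]; ring
    have haφ' : ∀ x, 0 ≤ φ (x + a) ∧ φ (x + a) ≤ C := fun x => hφ (x + a)
    have hI4 : Integrable ((closedBall (0 : EuclideanSpace ℝ (Fin n)) m).indicator
        (fun x => φ (x + a))) := by
      rw [integrable_indicator_iff measurableSet_closedBall]
      exact stmt8_intOn haφ haφ' (isCompact_closedBall _ _).measure_lt_top
    -- the splitting
    have hsplit : ∫ x, φ (x + a) ^ 2 * g x =
        (∫ x, φ (x + a) ^ 2 * (g x - t m x)) + ∫ x, φ (x + a) ^ 2 * t m x := by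
      rw [← integral_add hI5 hI2]
      congr 1; ext x; ring
    -- bound on first term
    have hbd1 : ∫ x, φ (x + a) ^ 2 * (g x - t m x) ≤ C ^ 2 * ((∫ x, g x) - (∫ x, t m x)) := by
      rw [← integral_sub hg (htm m), ← integral_const_mul]
      refine integral_mono hI5 (hI3.const_mul _) fun x => ?_
      exact mul_le_mul_of_nonneg_right (hφ2 (x + a)).2 (by linarith [htle m x])
    -- bound on second term
    have hbd2 : ∫ x, φ (x + a) ^ 2 * t m x ≤ C * m * Ia := by
      have hpt : ∀ x, φ (x + a) ^ 2 * t m x ≤ (C * m) *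
          (closedBall (0 : EuclideanSpace ℝ (Fin n)) m).indicator (fun y => φ (y + a)) x := by
        intro x
        by_cases hx : x ∈ closedBall (0 : EuclideanSpace ℝ (Fin n)) m
        · rw [htdef]
          simp only [Set.indicator_of_mem hx]
          have h1 : φ (x + a) ^ 2 ≤ C * φ (x + a) := by
            have := (hφ (x + a))
            nlinarith [this.1, this.2]
          have h2 : min (g x) (m : ℝ) ≤ m := min_le_right _ _
          calc φ (x + a) ^ 2 * min (g x) (m : ℝ) ≤ (C * φ (x + a)) * (m : ℝ) := by
                refine mul_le_mul h1 h2 (le_min (hgnn x) (Nat.cast_nonneg m)) ?_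
                exact mul_nonneg hC0 (hφ (x + a)).1
            _ = C * m * φ (x + a) := by ring
        · rw [htdef]
          simp only [Set.indicator_of_notMem hx, mul_zero]
          exact le_rfl
      calc ∫ x, φ (x + a) ^ 2 * t m x
          ≤ ∫ x, (C * m) * (closedBall (0 : EuclideanSpace ℝ (Fin n)) m).indicator
            (fun y => φ (y + a)) x := integral_mono hI2 (hI4.const_mul _) hpt
        _ = C * m * ∫ x, (closedBall (0 : EuclideanSpace ℝ (Fin n)) m).indicator
            (fun y => φ (y + a)) x := integral_const_mul _ _
        _ = C * m * Ia := by
            rw [integral_indicator measurableSet_closedBall,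
              stmt8_setIntegral_translate φ measurableSet_closedBall a]
    -- conclusion
    have hnn : 0 ≤ ∫ x, φ (x + a) ^ 2 * g x :=
      integral_nonneg fun x => mul_nonneg (sq_nonneg _) (hgnn x)
    rw [Real.norm_of_nonneg hnn]
    have hfin1 : C ^ 2 * ((∫ x, g x) - (∫ x, t m x)) ≤ C ^ 2 * δ1 :=
      mul_le_mul_of_nonneg_left hm.le (sq_nonneg C)
    have hfin2 : C * m * Ia ≤ C * m * δ2 :=
      mul_le_mul_of_nonneg_left ha.le (mul_nonneg hC0 (Nat.cast_nonneg m))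
    have hC2 : C ^ 2 * δ1 < ε / 2 := by
      have h1 : δ1 * (C ^ 2 + 1) = ε / 2 := by rw [hδ1]; field_simp
      nlinarith [hδ1pos]
    have hCm : C * m * δ2 < ε / 2 := by
      have h1 : δ2 * (C * m + 1) = ε / 2 := by rw [hδ2]; field_simp
      nlinarith [hδ2pos]
    calc ∫ x, φ (x + a) ^ 2 * g x
        = (∫ x, φ (x + a) ^ 2 * (g x - t m x)) + ∫ x, φ (x + a) ^ 2 * t m x := hsplit
      _ ≤ C ^ 2 * ((∫ x, g x) - (∫ x, t m x)) + C * m * Ia := add_le_add hbd1 hbd2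
      _ < ε := by linarith
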